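/- Let F and G be empirical distribution functions of real numbers λ_1 ≤ … ≤ λ_n and x_1 ≤ … ≤ x_n respectively. Then the Lévy distance satisfies L³(F, G) ≤ (1/n) Σ_{i=1}^n |λ_i − x_i|² ≤ (max_{1≤i≤n} |λ_i − x_i|)². -/
import Mathlib


open Finset

/-- The Lévy distance between two distribution functions. -/
noncomputable def levyDist (F G : ℝ → ℝ) : ℝ :=
  sInf {ε : ℝ | 0 < ε ∧ ∀ x : ℝ, F (x - ε) - ε ≤ G x ∧ G x ≤ F (x + ε) + ε}

/-- The empirical distribution function of the points `y 0, …, y (n-1)`. -/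
noncomputable def empDF {n : ℕ} (y : Fin n → ℝ) (ξ : ℝ) : ℝ :=
  ((Finset.univ.filter fun i : Fin n => y i ≤ ξ).card : ℝ) / n

lemma lowerSet_filter {n : ℕ} {y : Fin n → ℝ} (hy : Monotone y) (c : ℝ) (j : Fin n) :
    j ∈ Finset.univ.filter (fun i => y i ≤ c) ↔
      (j : ℕ) < (Finset.univ.filter (fun i : Fin n => y i ≤ c)).card := by
  set S := Finset.univ.filter (fun i : Fin n => y i ≤ c) with hS
  constructor
  · intro hj
    have hsub : Finset.Iic j ⊆ S := by
      intro i hi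
      simp only [Finset.mem_Iic] at hi
      simp only [hS, Finset.mem_filter, Finset.mem_univ, true_and]
      exact le_trans (hy hi) (by simpa [hS] using hj)
    have := Finset.card_le_card hsub
    rw [Fin.card_Iic] at this
    omega
  · intro hj
    by_contra hnot
    have hyj : ¬ y j ≤ c := by simpa [hS] using hnot
    have hsub : S ⊆ Finset.Iio j := by
      intro i hi
      simp only [Finset.mem_Iio]
      by_contra hij
      exact hyj (le_trans (hy (not_lt.mp hij)) (by simpa [hS] using hi))
    have := Finset.card_le_card hsub
    rw [Fin.card_Iio] at this
    omega

lemma empDF_nonneg {n : ℕ} (y : Fin n → ℝ) (ξ : ℝ) : 0 ≤ empDF y ξ := by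
  unfold empDF; positivity

lemma empDF_le_one {n : ℕ} (hn : 0 < n) (y : Fin n → ℝ) (ξ : ℝ) : empDF y ξ ≤ 1 := by
  unfold empDF
  rw [div_le_one (by exact_mod_cast hn)]
  exact_mod_cast (Finset.card_filter_le _ _).trans (by simp)

/-- Key one-sided estimate. -/
lemma key {n : ℕ} (hn : 0 < n) {y z : Fin n → ℝ} (hy : Monotone y) (hz : Monotone z)
    {ε : ℝ} (hε : 0 < ε) (h : ∑ i : Fin n, |y i - z i| ^ 2 < (n : ℝ) * ε ^ 3) (ξ : ℝ) :
    empDF z ξ ≤ empDF y (ξ + ε) + ε := by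
  by_contra hcon
  push_neg at hcon
  set Sz := Finset.univ.filter (fun i : Fin n => z i ≤ ξ) with hSz
  set Sy := Finset.univ.filter (fun i : Fin n => y i ≤ ξ + ε) with hSy
  have hnR : (0:ℝ) < n := by exact_mod_cast hn
  have hk : ((Sy.card : ℝ) + ε * n) < Sz.card := by
    have : (Sy.card : ℝ) / n + ε < (Sz.card : ℝ) / n := by
      simpa [empDF, hSy, hSz] using hcon
    rw [div_add' _ _ _ (ne_of_gt hnR), div_lt_div_iff₀ hnR hnR] at this
    nlinarith
  have hmk : Sy.card < Sz.card := by
    have : (Sy.card : ℝ) < Sz.card := by nlinarith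
    exact_mod_cast this
  have hsub : Sy ⊆ Sz := by
    intro i hi
    rw [hSy, lowerSet_filter hy, ← hSy] at hi
    rw [hSz, lowerSet_filter hz, ← hSz]
    omega
  set A := Sz \ Sy with hA
  have hcardA : A.card = Sz.card - Sy.card := Finset.card_sdiff_of_subset hsub
  have hbound : ∀ i ∈ A, ε ^ 2 ≤ |y i - z i| ^ 2 := by
    intro i hi
    rw [hA, Finset.mem_sdiff] at hi
    obtain ⟨hiz, hiy⟩ := hi
    have h1 : z i ≤ ξ := by simpa [hSz] using hiz
    have h2 : ¬ y i ≤ ξ + ε := by simpa [hSy] using hiy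
    have : ε ≤ |y i - z i| := by
      rw [abs_of_nonneg (by push_neg at h2; linarith)]
      push_neg at h2; linarith
    exact pow_le_pow_left₀ hε.le this 2
  have hsum1 : (A.card : ℝ) * ε ^ 2 ≤ ∑ i ∈ A, |y i - z i| ^ 2 := by
    calc (A.card : ℝ) * ε ^ 2 = ∑ _i ∈ A, ε ^ 2 := by rw [Finset.sum_const, nsmul_eq_mul]
    _ ≤ ∑ i ∈ A, |y i - z i| ^ 2 := Finset.sum_le_sum hbound
  have hsum2 : ∑ i ∈ A, |y i - z i| ^ 2 ≤ ∑ i : Fin n, |y i - z i| ^ 2 :=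
    Finset.sum_le_sum_of_subset_of_nonneg (Finset.subset_univ _)
      (fun i _ _ => by positivity)
  have hcardAR : (ε * n) < (A.card : ℝ) := by
    rw [hcardA]
    rw [Nat.cast_sub hmk.le]
    linarith
  nlinarith [sq_nonneg ε]

/-- Lemma 2.3 of Bai (1999): the cubed Lévy distance between the empirical
distribution functions of `λ_1 ≤ … ≤ λ_n` and `x_1 ≤ … ≤ x_n` is bounded by the mean
squared difference, which in turn is bounded by the squared maximal difference. -/
theorem stmt11 (n : ℕ) (hn : 0 < n) (l x : Fin n → ℝ)
    (hl : Monotone l) (hx : Monotone x) :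
    levyDist (empDF l) (empDF x) ^ 3 ≤ (1 / (n : ℝ)) * ∑ i : Fin n, |l i - x i| ^ 2 ∧
    (1 / (n : ℝ)) * ∑ i : Fin n, |l i - x i| ^ 2 ≤
      (Finset.univ.sup' ⟨⟨0, hn⟩, Finset.mem_univ _⟩ fun i : Fin n => |l i - x i|) ^ 2 := by
  have hnR : (0:ℝ) < n := by exact_mod_cast hn
  set S := (1 / (n : ℝ)) * ∑ i : Fin n, |l i - x i| ^ 2 with hSdef
  have hS0 : 0 ≤ S := by
    rw [hSdef]; positivity
  constructor
  · -- Lévy distance bound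
    set c : ℝ := S ^ ((1:ℝ)/3) with hc
    have hc0 : 0 ≤ c := Real.rpow_nonneg hS0 _
    have hc3 : c ^ 3 = S := by
      rw [hc, ← Real.rpow_natCast (S ^ ((1:ℝ)/3)) 3, ← Real.rpow_mul hS0]
      norm_num
    set E := {ε : ℝ | 0 < ε ∧ ∀ ξ : ℝ,
      empDF l (ξ - ε) - ε ≤ empDF x ξ ∧ empDF x ξ ≤ empDF l (ξ + ε) + ε} with hE
    have hbdd : BddBelow E := ⟨0, fun ε hε => hε.1.le⟩
    have hone : (1:ℝ) ∈ E := by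
      refine ⟨one_pos, fun ξ => ⟨?_, ?_⟩⟩
      · have := empDF_le_one hn l (ξ - 1)
        have := empDF_nonneg x ξ
        linarith
      · have := empDF_le_one hn x ξ
        have := empDF_nonneg l (ξ + 1)
        linarith
    have hne : E.Nonempty := ⟨1, hone⟩
    have hmem : ∀ ε : ℝ, c < ε → ε ∈ E := by
      intro ε hcε
      have hε : 0 < ε := lt_of_le_of_lt hc0 hcε
      have hε3 : S < ε ^ 3 := by
        calc S = c ^ 3 := hc3.symm
        _ < ε ^ 3 := by
          apply pow_lt_pow_left₀ hcε hc0
          norm_num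
      have hsum : ∑ i : Fin n, |l i - x i| ^ 2 < (n : ℝ) * ε ^ 3 := by
        have : (n:ℝ) * S = ∑ i : Fin n, |l i - x i| ^ 2 := by
          rw [hSdef]; field_simp
        nlinarith
      have hsum' : ∑ i : Fin n, |x i - l i| ^ 2 < (n : ℝ) * ε ^ 3 := by
        have : ∑ i : Fin n, |x i - l i| ^ 2 = ∑ i : Fin n, |l i - x i| ^ 2 := by
          apply Finset.sum_congr rfl
          intro i _
          rw [abs_sub_comm]
        rw [this]; exact hsum
      refine ⟨hε, fun ξ => ⟨?_, key hn hl hx hε hsum ξ⟩⟩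
      · have := key hn hx hl hε hsum' (ξ - ε)
        rw [sub_add_cancel] at this
        linarith
    have hle : levyDist (empDF l) (empDF x) ≤ c := by
      by_contra hlt
      push_neg at hlt
      set ε := (c + levyDist (empDF l) (empDF x)) / 2 with hεdef
      have h1 : c < ε := by rw [hεdef]; linarith
      have h2 : ε < levyDist (empDF l) (empDF x) := by rw [hεdef]; linarith
      exact absurd (csInf_le hbdd (hmem ε h1)) (not_le.mpr h2)
    have hnonneg : 0 ≤ levyDist (empDF l) (empDF x) :=
      le_csInf hne (fun ε hε => hε.1.le)
    calc levyDist (empDF l) (empDF x) ^ 3 ≤ c ^ 3 := pow_le_pow_left₀ hnonneg hle 3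
    _ = S := hc3
  · -- max bound
    set M := Finset.univ.sup' ⟨⟨0, hn⟩, Finset.mem_univ _⟩ fun i : Fin n => |l i - x i| with hM
    have hMle : ∀ i : Fin n, |l i - x i| ≤ M := fun i =>
      Finset.le_sup' (fun j : Fin n => |l j - x j|) (Finset.mem_univ i)
    have hM0 : 0 ≤ M := le_trans (abs_nonneg _) (hMle ⟨0, hn⟩)
    have hterm : ∀ i : Fin n, |l i - x i| ^ 2 ≤ M ^ 2 := fun i =>
      pow_le_pow_left₀ (abs_nonneg _) (hMle i) 2
    have hsum : ∑ i : Fin n, |l i - x i| ^ 2 ≤ (n:ℝ) * M ^ 2 := by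
      calc ∑ i : Fin n, |l i - x i| ^ 2 ≤ ∑ _i : Fin n, M ^ 2 :=
        Finset.sum_le_sum (fun i _ => hterm i)
      _ = (n:ℝ) * M ^ 2 := by simp [mul_comm]
    calc (1 / (n : ℝ)) * ∑ i : Fin n, |l i - x i| ^ 2
        ≤ (1 / (n : ℝ)) * ((n:ℝ) * M ^ 2) :=
          mul_le_mul_of_nonneg_left hsum (by positivity)
      _ = M ^ 2 := by field_simp
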